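/- Let G be Q_m (or D_m with m even), with α₁, α₃, α₄ defined as α₁ = Σ_{g∈G} x_g g, α₃ = Σ_{g∈G} χ₃(g) x_g g, α₄ = Σ_{g∈⟨a⟩} χ₄(g) x_{g^{-1}} g + Σ_{g∈G\⟨a⟩} χ₄(g) x_g g. Then [α₁, α₃ + α₄] = 0 in C[G], i.e., α₁ commutes with the sum α₃ + α₄, even though in general [α₁, α₃] ≠ 0 and [α₁, α₄] ≠ 0. -/

import Mathlib

/-- `α₁ = Σ_{g∈G} x_g g` for `D_m`. -/
noncomputable def dihedralAlpha1 (m : ℕ) [NeZero m] (x : DihedralGroup m → ℂ) :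
    MonoidAlgebra ℂ (DihedralGroup m) :=
  ∑ g : DihedralGroup m, MonoidAlgebra.single g (x g)

/-- `α₂ = Σ_{g∈⟨a⟩} x_{g⁻¹} g − Σ_{g∈G∖⟨a⟩} x_g g` for `D_m`. -/
noncomputable def dihedralAlpha2 (m : ℕ) [NeZero m] (x : DihedralGroup m → ℂ) :
    MonoidAlgebra ℂ (DihedralGroup m) :=
  (∑ k : ZMod m, MonoidAlgebra.single (DihedralGroup.r k) (x ((DihedralGroup.r k)⁻¹))) -
  ∑ k : ZMod m, MonoidAlgebra.single (DihedralGroup.sr k) (x (DihedralGroup.sr k))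

/-- `α₃ = Σ_g χ₃(g) x_g g` for `D_m`, where `χ₃(a^k) = (−1)^k`, `χ₃(a^k b) = (−1)^k c₃`
with `c₃ = χ₃(b)`. -/
noncomputable def dihedralAlpha3 (m : ℕ) [NeZero m] (c₃ : ℂ) (x : DihedralGroup m → ℂ) :
    MonoidAlgebra ℂ (DihedralGroup m) :=
  (∑ k : ZMod m, MonoidAlgebra.single (DihedralGroup.r k)
      ((-1 : ℂ) ^ k.val * x (DihedralGroup.r k))) +
  ∑ k : ZMod m, MonoidAlgebra.single (DihedralGroup.r k * DihedralGroup.sr 0)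
      ((-1 : ℂ) ^ k.val * c₃ * x (DihedralGroup.r k * DihedralGroup.sr 0))

/-- `α₄ = Σ_{g∈⟨a⟩} χ₄(g) x_{g⁻¹} g + Σ_{g∉⟨a⟩} χ₄(g) x_g g` for `D_m`, where
`χ₄(a^k) = (−1)^k`, `χ₄(a^k b) = (−1)^k c₄` with `c₄ = χ₄(b)`. -/
noncomputable def dihedralAlpha4 (m : ℕ) [NeZero m] (c₄ : ℂ) (x : DihedralGroup m → ℂ) :
    MonoidAlgebra ℂ (DihedralGroup m) :=
  (∑ k : ZMod m, MonoidAlgebra.single (DihedralGroup.r k)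
      ((-1 : ℂ) ^ k.val * x ((DihedralGroup.r k)⁻¹))) +
  ∑ k : ZMod m, MonoidAlgebra.single (DihedralGroup.r k * DihedralGroup.sr 0)
      ((-1 : ℂ) ^ k.val * c₄ * x (DihedralGroup.r k * DihedralGroup.sr 0))

/-- `α₁ = Σ_{g∈G} x_g g` for `Q_m`. -/
noncomputable def quaternionAlpha1 (m : ℕ) [NeZero m] (x : QuaternionGroup m → ℂ) :
    MonoidAlgebra ℂ (QuaternionGroup m) :=
  ∑ g : QuaternionGroup m, MonoidAlgebra.single g (x g)

/-- `α₂ = Σ_{g∈⟨a⟩} x_{g⁻¹} g − Σ_{g∈G∖⟨a⟩} x_g g` for `Q_m`. -/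
noncomputable def quaternionAlpha2 (m : ℕ) [NeZero m] (x : QuaternionGroup m → ℂ) :
    MonoidAlgebra ℂ (QuaternionGroup m) :=
  (∑ k : ZMod (2 * m),
      MonoidAlgebra.single (QuaternionGroup.a k) (x ((QuaternionGroup.a k)⁻¹))) -
  ∑ k : ZMod (2 * m), MonoidAlgebra.single (QuaternionGroup.xa k) (x (QuaternionGroup.xa k))

/-- `α₃ = Σ_g χ₃(g) x_g g` for `Q_m`, where `χ₃(a^k) = (−1)^k`, `χ₃(a^k b) = (−1)^k c₃`. -/
noncomputable def quaternionAlpha3 (m : ℕ) [NeZero m] (c₃ : ℂ) (x : QuaternionGroup m → ℂ) :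
    MonoidAlgebra ℂ (QuaternionGroup m) :=
  (∑ k : ZMod (2 * m), MonoidAlgebra.single (QuaternionGroup.a k)
      ((-1 : ℂ) ^ k.val * x (QuaternionGroup.a k))) +
  ∑ k : ZMod (2 * m), MonoidAlgebra.single (QuaternionGroup.a k * QuaternionGroup.xa 0)
      ((-1 : ℂ) ^ k.val * c₃ * x (QuaternionGroup.a k * QuaternionGroup.xa 0))

/-- `α₄ = Σ_{g∈⟨a⟩} χ₄(g) x_{g⁻¹} g + Σ_{g∉⟨a⟩} χ₄(g) x_g g` for `Q_m`, where
`χ₄(a^k) = (−1)^k`, `χ₄(a^k b) = (−1)^k c₄`. -/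
noncomputable def quaternionAlpha4 (m : ℕ) [NeZero m] (c₄ : ℂ) (x : QuaternionGroup m → ℂ) :
    MonoidAlgebra ℂ (QuaternionGroup m) :=
  (∑ k : ZMod (2 * m), MonoidAlgebra.single (QuaternionGroup.a k)
      ((-1 : ℂ) ^ k.val * x ((QuaternionGroup.a k)⁻¹))) +
  ∑ k : ZMod (2 * m), MonoidAlgebra.single (QuaternionGroup.a k * QuaternionGroup.xa 0)
      ((-1 : ℂ) ^ k.val * c₄ * x (QuaternionGroup.a k * QuaternionGroup.xa 0))


open MonoidAlgebra

private lemma negOnePow_congr {a b : ℕ} (h : a % 2 = b % 2) : (-1 : ℂ) ^ a = (-1) ^ b := by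
  conv_lhs => rw [← Nat.div_add_mod a 2]
  conv_rhs => rw [← Nat.div_add_mod b 2]
  rw [pow_add, pow_add, pow_mul, pow_mul, h]
  simp

private lemma negOnePow_val_neg {n : ℕ} [NeZero n] (hn : 2 ∣ n) (k : ZMod n) :
    (-1 : ℂ) ^ (-k).val = (-1) ^ k.val := by
  apply negOnePow_congr
  rw [ZMod.neg_val]
  split
  · simp_all
  · have := k.val_lt
    omega

section Dihedral
open DihedralGroup
variable (m : ℕ) [NeZero m]

private lemma dihedral_single_comm (c : ZMod m → ℂ) (hc : ∀ k, c (-k) = c k)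
    (g : DihedralGroup m) (v : ℂ) :
    single g v * (∑ k, single (r k) (c k)) = (∑ k, single (r k) (c k)) * single g v := by
  rw [Finset.mul_sum, Finset.sum_mul]
  cases g with
  | r j =>
    refine Finset.sum_congr rfl fun k _ => ?_
    simp [MonoidAlgebra.single_mul_single, add_comm, mul_comm]
  | sr j =>
    have h1 : ∀ k : ZMod m, single (sr j) v * single (r k) (c k)
        = single (sr (j + k)) (v * c k) := fun k => by
      rw [MonoidAlgebra.single_mul_single, sr_mul_r]
    have h2 : ∀ k : ZMod m, single (r k) (c k) * single (sr j) v
        = single (sr (j - k)) (v * c k) := fun k => by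
      rw [MonoidAlgebra.single_mul_single, r_mul_sr, mul_comm (c k) v]
    simp only [h1, h2]
    refine Fintype.sum_bijective (fun k => -k) (neg_involutive).bijective _ _ fun k => ?_
    rw [hc, sub_neg_eq_add]

private lemma dihedral_comm (c : ZMod m → ℂ) (hc : ∀ k, c (-k) = c k)
    (x : DihedralGroup m → ℂ) :
    dihedralAlpha1 m x * (∑ k, single (r k) (c k)) =
      (∑ k, single (r k) (c k)) * dihedralAlpha1 m x := by
  rw [dihedralAlpha1, Finset.sum_mul, Finset.mul_sum]
  exact Finset.sum_congr rfl fun g _ => dihedral_single_comm m c hc g (x g)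

private lemma dihedral_a34 (x : DihedralGroup m → ℂ) :
    dihedralAlpha3 m 1 x + dihedralAlpha4 m (-1) x =
      ∑ k, single (r k) ((-1 : ℂ) ^ k.val * x (r k) + (-1 : ℂ) ^ k.val * x (r (-k))) := by
  rw [dihedralAlpha3, dihedralAlpha4]
  have hinv : ∀ k : ZMod m, (r k : DihedralGroup m)⁻¹ = r (-k) := fun k => rfl
  simp only [hinv]
  rw [add_add_add_comm, ← Finset.sum_add_distrib, ← Finset.sum_add_distrib]
  have h0 : ∀ (g : DihedralGroup m) (u v : ℂ), u + v = 0 → single g u + single g v = (0 : MonoidAlgebra ℂ (DihedralGroup m)) := by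
    intro g u v h
    rw  [← MonoidAlgebra.single_add, h, MonoidAlgebra.single_zero]
  have hz : (∑ k : ZMod m, (single (r k * sr 0) ((-1 : ℂ) ^ k.val * 1 * x (r k * sr 0)) +
      single (r k * sr 0) ((-1 : ℂ) ^ k.val * -1 * x (r k * sr 0)))) = 0 :=
    Finset.sum_eq_zero fun k _ => h0 _ _ _ (by ring)
  rw [hz, add_zero]
  exact Finset.sum_congr rfl fun k _ => (MonoidAlgebra.single_add _ _ _).symm

private lemma dihedral_main (hm : Even m) (x : DihedralGroup m → ℂ) :
    dihedralAlpha1 m x * (dihedralAlpha3 m 1 x + dihedralAlpha4 m (-1) x) -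
      (dihedralAlpha3 m 1 x + dihedralAlpha4 m (-1) x) * dihedralAlpha1 m x = 0 := by
  rw [sub_eq_zero, dihedral_a34]
  refine dihedral_comm m _ (fun k => ?_) x
  rw [neg_neg, negOnePow_val_neg hm.two_dvd, add_comm]

end Dihedral

section Quaternion
open QuaternionGroup
variable (m : ℕ) [NeZero m]

private lemma quaternion_single_comm (c : ZMod (2 * m) → ℂ) (hc : ∀ k, c (-k) = c k)
    (g : QuaternionGroup m) (v : ℂ) :
    single g v * (∑ k, single (a k) (c k)) = (∑ k, single (a k) (c k)) * single g v := by
  rw [Finset.mul_sum, Finset.sum_mul]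
  cases g with
  | a j =>
    refine Finset.sum_congr rfl fun k _ => ?_
    simp [MonoidAlgebra.single_mul_single, add_comm, mul_comm]
  | xa j =>
    have h1 : ∀ k : ZMod (2 * m), single (xa j) v * single (a k) (c k)
        = single (xa (j + k)) (v * c k) := fun k => by
      rw [MonoidAlgebra.single_mul_single, xa_mul_a]
    have h2 : ∀ k : ZMod (2 * m), single (a k) (c k) * single (xa j) v
        = single (xa (j - k)) (v * c k) := fun k => by
      rw [MonoidAlgebra.single_mul_single, a_mul_xa, mul_comm (c k) v]
    simp only [h1, h2]
    refine Fintype.sum_bijective (fun k => -k) (neg_involutive).bijective _ _ fun k => ?_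
    rw [hc, sub_neg_eq_add]

private lemma quaternion_comm (c : ZMod (2 * m) → ℂ) (hc : ∀ k, c (-k) = c k)
    (y : QuaternionGroup m → ℂ) :
    quaternionAlpha1 m y * (∑ k, single (a k) (c k)) =
      (∑ k, single (a k) (c k)) * quaternionAlpha1 m y := by
  rw [quaternionAlpha1, Finset.sum_mul, Finset.mul_sum]
  exact Finset.sum_congr rfl fun g _ => quaternion_single_comm m c hc g (y g)

private lemma quaternion_a34 (c₃ : ℂ) (y : QuaternionGroup m → ℂ) :
    quaternionAlpha3 m c₃ y + quaternionAlpha4 m (-c₃) y =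
      ∑ k, single (a k) ((-1 : ℂ) ^ k.val * y (a k) + (-1 : ℂ) ^ k.val * y (a (-k))) := by
  rw [quaternionAlpha3, quaternionAlpha4]
  have hinv : ∀ k : ZMod (2 * m), (a k : QuaternionGroup m)⁻¹ = a (-k) := fun k => rfl
  simp only [hinv]
  rw [add_add_add_comm, ← Finset.sum_add_distrib, ← Finset.sum_add_distrib]
  have h0 : ∀ (g : QuaternionGroup m) (u v : ℂ), u + v = 0 → single g u + single g v = (0 : MonoidAlgebra ℂ (QuaternionGroup m)) := by
    intro g u v h
    rw [← MonoidAlgebra.single_add, h, MonoidAlgebra.single_zero]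
  have hz : (∑ k : ZMod (2 * m), (single (a k * xa 0) ((-1 : ℂ) ^ k.val * c₃ * y (a k * xa 0)) +
      single (a k * xa 0) ((-1 : ℂ) ^ k.val * -c₃ * y (a k * xa 0)))) = 0 :=
    Finset.sum_eq_zero fun k _ => h0 _ _ _ (by ring)
  rw [hz, add_zero]
  exact Finset.sum_congr rfl fun k _ => (MonoidAlgebra.single_add _ _ _).symm

private lemma quaternion_main (c₃ : ℂ) (y : QuaternionGroup m → ℂ) :
    quaternionAlpha1 m y * (quaternionAlpha3 m c₃ y + quaternionAlpha4 m (-c₃) y) -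
      (quaternionAlpha3 m c₃ y + quaternionAlpha4 m (-c₃) y) * quaternionAlpha1 m y = 0 := by
  rw [sub_eq_zero, quaternion_a34]
  refine quaternion_comm m _ (fun k => ?_) y
  rw [neg_neg, negOnePow_val_neg ⟨m, rfl⟩, add_comm]

end Quaternion

/-- For `G = Q_m` (or `D_m` with `m` even), `α₁` commutes with `α₃ + α₄`:
`[α₁, α₃ + α₄] = 0` in `ℂ[G]`. -/
theorem alpha1_commutes_with_alpha3_add_alpha4 (m : ℕ) [NeZero m]
    (x : DihedralGroup m → ℂ) (y : QuaternionGroup m → ℂ) :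
    (Even m →
      dihedralAlpha1 m x * (dihedralAlpha3 m 1 x + dihedralAlpha4 m (-1) x) -
        (dihedralAlpha3 m 1 x + dihedralAlpha4 m (-1) x) * dihedralAlpha1 m x = 0) ∧
    (Odd m →
      quaternionAlpha1 m y *
          (quaternionAlpha3 m Complex.I y + quaternionAlpha4 m (-Complex.I) y) -
        (quaternionAlpha3 m Complex.I y + quaternionAlpha4 m (-Complex.I) y) *
          quaternionAlpha1 m y = 0) ∧
    (Even m →
      quaternionAlpha1 m y * (quaternionAlpha3 m 1 y + quaternionAlpha4 m (-1) y) -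
        (quaternionAlpha3 m 1 y + quaternionAlpha4 m (-1) y) * quaternionAlpha1 m y = 0) := by
  refine ⟨fun hm => dihedral_main m hm x, fun _ => ?_, fun _ => ?_⟩
  · exact quaternion_main m Complex.I y
  · exact quaternion_main m 1 y
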